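/- Let (X,d) and (Y,d') be geodesic δ-hyperbolic spaces and let φ: X → Y be a (λ,μ)-quasi-isometry. If Y is boundary rigid, then X is boundary rigid. (Hence boundary rigidity of geodesic Gromov hyperbolic spaces is a quasi-isometry invariant.) -/

import Mathlib

open Metric Filter Set

namespace BoundaryRigidity

universe u

variable {X : Type*} {Y : Type*}

/-- The Gromov product of `x` and `y` with respect to the base point `w`. -/
noncomputable def gp [MetricSpace X] (w x y : X) : ℝ :=
  (dist x w + dist y w - dist x y) / 2

/-- A Gromov sequence: `(x_i | x_j)_w → ∞` as `i, j → ∞` (for every base point,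
the condition being base-point independent). -/
def IsGromovSeq [MetricSpace X] (u : ℕ → X) : Prop :=
  ∀ w : X, Tendsto (fun p : ℕ × ℕ => gp w (u p.1) (u p.2)) atTop atTop

/-- Two Gromov sequences are equivalent if `(x_i | y_i)_w → ∞`. -/
def GromovEquiv [MetricSpace X] (u v : ℕ → X) : Prop :=
  IsGromovSeq u ∧ IsGromovSeq v ∧
    ∀ w : X, Tendsto (fun i => gp w (u i) (v i)) atTop atTop

/-- `γ` is a geodesic (unit-speed) parametrization on the interval `[a, b]`. -/
def IsGeodSegment [MetricSpace X] (γ : ℝ → X) (a b : ℝ) : Prop :=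
  ∀ s ∈ Icc a b, ∀ t ∈ Icc a b, dist (γ s) (γ t) = |s - t|

/-- A geodesic metric space: any two points are joined by a geodesic. -/
def GeodesicSpace (X : Type*) [MetricSpace X] : Prop :=
  ∀ x y : X, ∃ γ : ℝ → X, IsGeodSegment γ 0 (dist x y) ∧ γ 0 = x ∧ γ (dist x y) = y

/-- δ-hyperbolicity (Rips condition): every point on an edge of a geodesic triangle is
within `δ` of the union of the other two edges. -/
def DeltaHyp (X : Type*) [MetricSpace X] (δ : ℝ) : Prop :=
  ∀ (γ₁ γ₂ γ₃ : ℝ → X) (a₁ b₁ a₂ b₂ a₃ b₃ : ℝ),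
    IsGeodSegment γ₁ a₁ b₁ → IsGeodSegment γ₂ a₂ b₂ → IsGeodSegment γ₃ a₃ b₃ →
    a₁ ≤ b₁ → a₂ ≤ b₂ → a₃ ≤ b₃ →
    γ₁ a₁ = γ₃ a₃ → γ₁ b₁ = γ₂ a₂ → γ₂ b₂ = γ₃ b₃ →
    ∀ s ∈ Icc a₁ b₁, ∃ p : X,
      ((∃ t ∈ Icc a₂ b₂, p = γ₂ t) ∨ (∃ t ∈ Icc a₃ b₃, p = γ₃ t)) ∧ dist (γ₁ s) p ≤ δ

/-- A point of `X̄ = X ∪ ∂X`: an interior point, or a boundary point represented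
by a Gromov sequence. -/
def IsXBarPt [MetricSpace X] : X ⊕ (ℕ → X) → Prop
  | Sum.inl _ => True
  | Sum.inr u => IsGromovSeq u

/-- The left end of the curve `γ` (restricted to `I`) is the point `p` of `X̄`:
either `γ` attains the interior point at the minimum of `I`, or `I` is unbounded
below and `γ` converges at `-∞` to the given boundary point. -/
def LeftEnd [MetricSpace X] (γ : ℝ → X) (I : Set ℝ) : X ⊕ (ℕ → X) → Prop
  | Sum.inl a => ∃ s ∈ I, γ s = a ∧ ∀ t ∈ I, s ≤ t
  | Sum.inr u => ∃ σ : ℕ → ℝ, (∀ n, σ n ∈ I) ∧ Tendsto σ atTop atBot ∧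
      GromovEquiv (fun n => γ (σ n)) u

/-- The right end of the curve `γ` (restricted to `I`) is the point `p` of `X̄`. -/
def RightEnd [MetricSpace X] (γ : ℝ → X) (I : Set ℝ) : X ⊕ (ℕ → X) → Prop
  | Sum.inl a => ∃ s ∈ I, γ s = a ∧ ∀ t ∈ I, t ≤ s
  | Sum.inr u => ∃ σ : ℕ → ℝ, (∀ n, σ n ∈ I) ∧ Tendsto σ atTop atTop ∧
      GromovEquiv (fun n => γ (σ n)) u

/-- `γ` restricted to the interval `I` is a geodesic joining `p` to `q` in `X̄`. -/
def IsGeodJoining [MetricSpace X] (γ : ℝ → X) (I : Set ℝ) (p q : X ⊕ (ℕ → X)) : Prop :=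
  I.Nonempty ∧ I.OrdConnected ∧ (∀ s ∈ I, ∀ t ∈ I, dist (γ s) (γ t) = |s - t|) ∧
    LeftEnd γ I p ∧ RightEnd γ I q

/-- `γ` restricted to the interval `I` is a `(K, C)`-quasi-geodesic joining `p` to `q`. -/
def IsQGeodJoining [MetricSpace X] (K C : ℝ) (γ : ℝ → X) (I : Set ℝ)
    (p q : X ⊕ (ℕ → X)) : Prop :=
  I.Nonempty ∧ I.OrdConnected ∧
    (∀ s ∈ I, ∀ t ∈ I, K⁻¹ * |s - t| - C ≤ dist (γ s) (γ t) ∧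
      dist (γ s) (γ t) ≤ K * |s - t| + C) ∧
    LeftEnd γ I p ∧ RightEnd γ I q

/-- `x` is a `(K, C, ρ)`-quasi-centroid of the triple `p₁, p₂, p₃ ∈ X̄`. -/
def IsQuasiCentroid [MetricSpace X] (K C ρ : ℝ) (x : X) (p₁ p₂ p₃ : X ⊕ (ℕ → X)) : Prop :=
  ∃ (γ₁ γ₂ γ₃ : ℝ → X) (I₁ I₂ I₃ : Set ℝ),
    IsQGeodJoining K C γ₁ I₁ p₁ p₂ ∧ IsQGeodJoining K C γ₂ I₂ p₂ p₃ ∧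
      IsQGeodJoining K C γ₃ I₃ p₁ p₃ ∧
      (∃ s ∈ I₁, dist x (γ₁ s) ≤ ρ) ∧ (∃ s ∈ I₂, dist x (γ₂ s) ≤ ρ) ∧
      (∃ s ∈ I₃, dist x (γ₃ s) ≤ ρ)

/-- `Δ_{(K,C,ρ)}(∂X)`: all `(K,C,ρ)`-quasi-centroids of triples of boundary points. -/
def centroidSetBdry (X : Type*) [MetricSpace X] (K C ρ : ℝ) : Set X :=
  {x | ∃ u₁ u₂ u₃ : ℕ → X, IsGromovSeq u₁ ∧ IsGromovSeq u₂ ∧ IsGromovSeq u₃ ∧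
    IsQuasiCentroid K C ρ x (Sum.inr u₁) (Sum.inr u₂) (Sum.inr u₃)}

/-- `E` is `M`-roughly full in `X`. -/
def RoughlyFull [MetricSpace X] (E : Set X) (M : ℝ) : Prop :=
  ∀ x : X, ∃ e ∈ E, dist x e ≤ M

/-- `(K, C)`-quasi-isometric embedding. -/
def IsQIEmbedding [MetricSpace X] [MetricSpace Y] (K C : ℝ) (f : X → Y) : Prop :=
  1 ≤ K ∧ 0 ≤ C ∧ ∀ x y : X,
    K⁻¹ * dist x y - C ≤ dist (f x) (f y) ∧ dist (f x) (f y) ≤ K * dist x y + C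

/-- `(K, C)`-quasi-isometry. -/
def IsQuasiIsometry [MetricSpace X] [MetricSpace Y] (K C : ℝ) (f : X → Y) : Prop :=
  IsQIEmbedding K C f ∧ ∀ y : Y, ∃ x : X, dist y (f x) ≤ C

/-- `X` is boundary rigid: every self quasi-isometry inducing the identity map on the
Gromov boundary (i.e. sending every Gromov sequence to an equivalent one) has finite
displacement. -/
def BoundaryRigid (X : Type*) [MetricSpace X] : Prop :=
  ∀ (K C : ℝ) (f : X → X), IsQuasiIsometry K C f →
    (∀ u : ℕ → X, IsGromovSeq u → GromovEquiv u (f ∘ u)) →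
    ∃ M : ℝ, ∀ x : X, dist x (f x) ≤ M

/-- `o ∈ X̄` is an `L`-pole: every point of `X` lies within `L` of some geodesic
from `o` to some boundary point. -/
def PoleAt [MetricSpace X] (L : ℝ) (o : X ⊕ (ℕ → X)) : Prop :=
  IsXBarPt o ∧ ∀ x : X, ∃ (γ : ℝ → X) (I : Set ℝ) (v : ℕ → X), IsGromovSeq v ∧
    IsGeodJoining γ I o (Sum.inr v) ∧ ∃ s ∈ I, dist x (γ s) ≤ L

/-- `X` has a pole. -/
def HasPole (X : Type*) [MetricSpace X] : Prop :=
  ∃ (L : ℝ) (o : X ⊕ (ℕ → X)), 0 ≤ L ∧ PoleAt L o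

/-- `ρ_{w,ε}` on boundary classes: `e^{-ε (ξ|ζ)_w}` where the Gromov product of two
boundary points is the infimum over representatives of the liminf of Gromov products;
equivalently the sup over representatives of the limsup of `e^{-ε (x_i|y_i)_w}`. -/
noncomputable def visRho [MetricSpace X] (w : X) (ε : ℝ) (u v : ℕ → X) : ℝ :=
  sSup {t | ∃ u' v' : ℕ → X, GromovEquiv u u' ∧ GromovEquiv v v' ∧
    t = Filter.limsup (fun i => Real.exp (-ε * gp w (u' i) (v' i))) atTop}

/-- The visual metric `d_{w,ε}` on boundary classes, as a chain infimum of `ρ_{w,ε}`. -/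
noncomputable def visDist [MetricSpace X] (w : X) (ε : ℝ) (u v : ℕ → X) : ℝ :=
  sInf {s | ∃ (n : ℕ) (c : ℕ → ℕ → X), 1 ≤ n ∧ (∀ i, i ≤ n → IsGromovSeq (c i)) ∧
    GromovEquiv (c 0) u ∧ GromovEquiv (c n) v ∧
    s = ∑ i ∈ Finset.range n, visRho w ε (c i) (c (i + 1))}

/-- The Gromov boundary of `X` (with any visual metric whose parameters are admissible
for `δ`) is uniformly perfect. -/
def BoundaryUniformlyPerfect (X : Type*) [MetricSpace X] (δ : ℝ) : Prop :=
  ∀ (w : X) (ε : ℝ), 0 < ε → ε < 1 → ε * (5 * δ) < 1 →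
    ∃ S : ℝ, 1 ≤ S ∧ ∃ r₀ : ℝ, 0 < r₀ ∧
      ∀ u : ℕ → X, IsGromovSeq u → ∀ r : ℝ, 0 < r → r ≤ r₀ →
        ∃ v : ℕ → X, IsGromovSeq v ∧ r / S < visDist w ε u v ∧ visDist w ε u v ≤ r

/-- Bi-infinite geodesic. -/
def IsBiInfGeod [MetricSpace X] (γ : ℝ → X) : Prop :=
  ∀ s t : ℝ, dist (γ s) (γ t) = |s - t|

/-- Distance between (the images of) two bi-infinite geodesics. -/
noncomputable def lineDist [MetricSpace X] (γ γ' : ℝ → X) : ℝ :=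
  sInf {r | ∃ s t : ℝ, r = dist (γ s) (γ' t)}

/-- First condition in the definition of geodesic richness. -/
def RichCondOne (X : Type*) [MetricSpace X] (r₀ r₁ r₂ : ℝ) : Prop :=
  ∀ p q : X, r₀ ≤ dist p q → ∃ γ : ℝ → X, IsBiInfGeod γ ∧
    infDist p (range γ) < r₁ ∧ |infDist q (range γ) - dist p q| < r₂

/-- Second condition in the definition of geodesic richness. -/
def RichCondTwo (X : Type*) [MetricSpace X] (r₃ r₄ : ℝ) : Prop :=
  ∀ γ : ℝ → X, IsBiInfGeod γ → ∀ p : X, ∃ γ' : ℝ → X, IsBiInfGeod γ' ∧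
    infDist p (range γ') < r₃ ∧ |infDist p (range γ) - lineDist γ' γ| < r₄

/-- Geodesically rich space. -/
def GeodesicallyRich (X : Type*) [MetricSpace X] : Prop :=
  ∃ r₀ r₁ r₂ r₃ r₄ : ℝ, RichCondOne X r₀ r₁ r₂ ∧ RichCondTwo X r₃ r₄

/-- Every closest-point projection of `x` to the geodesic segment `γ|_{[a,b]}`
lies within `R` of the point `c`. -/
def segProjIn [MetricSpace X] (γ : ℝ → X) (a b : ℝ) (x c : X) (R : ℝ) : Prop :=
  ∀ s ∈ Icc a b, (∀ t ∈ Icc a b, dist x (γ s) ≤ dist x (γ t)) → dist (γ s) c ≤ R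

/-- Projection to a geodesic `[y,z]` (parametrized by `γ` on `I`): the set of closest
points for interior `x`, and the set of `(1,0,3δ)`-quasi-centroids of `{x,y,z}` for
boundary `x`. -/
def projSet [MetricSpace X] (δ : ℝ) (γ : ℝ → X) (I : Set ℝ) (y z : X ⊕ (ℕ → X)) :
    X ⊕ (ℕ → X) → Set X
  | Sum.inl a => {p | ∃ s ∈ I, p = γ s ∧ ∀ t ∈ I, dist a (γ s) ≤ dist a (γ t)}
  | Sum.inr u => {p | IsQuasiCentroid 1 0 (3 * δ) p (Sum.inr u) y z}

/-! ### Auxiliary lemmas -/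

section Aux

variable {A : Type*} {B : Type*} [MetricSpace A] [MetricSpace B]

lemma gp_nonneg (w x y : A) : 0 ≤ gp w x y := by
  have h := dist_triangle x w y
  rw [dist_comm w y] at h
  simp only [gp]; linarith

lemma gp_self (w x : A) : gp w x x = dist x w := by simp [gp]

lemma gp_symm (w x y : A) : gp w x y = gp w y x := by
  simp only [gp, dist_comm x y]; ring

lemma gp_le_left (w x y : A) : gp w x y ≤ dist x w := by
  have h := dist_triangle y x w
  rw [dist_comm y x] at h
  simp only [gp]; linarith

lemma gp_le_right (w x y : A) : gp w x y ≤ dist y w := by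
  rw [gp_symm]; exact gp_le_left w y x

lemma gp_ge_sub (w x y : A) : dist x w - dist x y ≤ gp w x y := by
  have h := dist_triangle x y w
  simp only [gp]; linarith

lemma gp_base (w w' x y : A) : gp w x y - dist w w' ≤ gp w' x y := by
  have h1 := dist_triangle x w' w
  have h2 := dist_triangle y w' w
  rw [dist_comm w' w] at h1 h2
  simp only [gp]; linarith

lemma gp_perturb_left (w : A) (x x' y : A) : gp w x y - dist x x' ≤ gp w x' y := by
  have h1 := dist_triangle x x' w
  have h2 := dist_triangle x' x y
  rw [dist_comm x' x] at h2
  simp only [gp]; linarith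

lemma gp_perturb_right (w : A) (x y y' : A) : gp w x y - dist y y' ≤ gp w x y' := by
  rw [gp_symm w x y, gp_symm w x y']; exact gp_perturb_left w y y' x

lemma geod_restrict {γ : ℝ → A} {a b a' b' : ℝ} (h : IsGeodSegment γ a b)
    (ha : a ≤ a') (hb : b' ≤ b) : IsGeodSegment γ a' b' := fun s hs t ht =>
  h s ⟨le_trans ha hs.1, le_trans hs.2 hb⟩ t ⟨le_trans ha ht.1, le_trans ht.2 hb⟩

lemma geod_shift {γ : ℝ → A} {a b : ℝ} (h : IsGeodSegment γ a b) :
    IsGeodSegment (fun t => γ (t + a)) 0 (b - a) := by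
  intro s hs t ht
  simp only
  rw [h (s + a) ⟨by linarith [hs.1], by linarith [hs.2]⟩
      (t + a) ⟨by linarith [ht.1], by linarith [ht.2]⟩]
  congr 1; ring

/-- T1: the Gromov product of the endpoints is a lower bound for the distance from `w`
to any point of the geodesic. -/
lemma gp_le_dist_geod {γ : ℝ → A} {a b : ℝ} (h : IsGeodSegment γ a b) (hab : a ≤ b)
    (w : A) {s : ℝ} (hs : s ∈ Icc a b) : gp w (γ a) (γ b) ≤ dist w (γ s) := by
  have hma : a ∈ Icc a b := ⟨le_refl _, hab⟩
  have hmb : b ∈ Icc a b := ⟨hab, le_refl _⟩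
  have h1 : dist (γ a) (γ s) = s - a := by
    rw [h a hma s hs, abs_of_nonpos (by linarith [hs.1])]; ring
  have h2 : dist (γ s) (γ b) = b - s := by
    rw [h s hs b hmb, abs_of_nonpos (by linarith [hs.2])]; ring
  have h3 : dist (γ a) (γ b) = b - a := by
    rw [h a hma b hmb, abs_of_nonpos (by linarith)]; ring
  have t1 := dist_triangle (γ a) (γ s) w
  have t2 := dist_triangle (γ b) (γ s) w
  rw [dist_comm (γ b) (γ s)] at t2
  have t3 : dist w (γ s) = dist (γ s) w := dist_comm _ _
  simp only [gp]; linarith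

/-- T2: some point of a geodesic is within `2δ` of the Gromov product value. -/
lemma exists_near_geod {δ : ℝ} (hg : GeodesicSpace A) (hh : DeltaHyp A δ)
    {γ : ℝ → A} {L : ℝ} (hγ : IsGeodSegment γ 0 L) (hL : 0 ≤ L) (w : A) :
    ∃ s ∈ Icc (0:ℝ) L, dist w (γ s) ≤ gp w (γ 0) (γ L) + 2 * δ := by
  have hmem0 : (0:ℝ) ∈ Icc (0:ℝ) L := ⟨le_refl _, hL⟩
  have hmemL : L ∈ Icc (0:ℝ) L := ⟨hL, le_refl _⟩
  have hpq : dist (γ 0) (γ L) = L := by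
    rw [hγ 0 hmem0 L hmemL, abs_of_nonpos (by linarith)]; ring
  obtain ⟨α, hα, hα0, hα1⟩ := hg (γ 0) w
  obtain ⟨β, hβ, hβ0, hβ1⟩ := hg (γ L) w
  set t0 := gp (γ 0) (γ L) w with ht0
  have ht0Eq : t0 = (dist (γ L) (γ 0) + dist w (γ 0) - dist (γ L) w) / 2 := by
    simp only [ht0, gp]
  have hgpw : gp w (γ 0) (γ L) = (dist (γ 0) w + dist (γ L) w - L) / 2 := by
    simp only [gp, hpq]
  have c1 : dist (γ L) (γ 0) = L := by rw [dist_comm]; exact hpq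
  have c2 : dist w (γ 0) = dist (γ 0) w := dist_comm _ _
  have c3 : dist w (γ L) = dist (γ L) w := dist_comm _ _
  have ht0mem : t0 ∈ Icc (0:ℝ) L := by
    constructor
    · exact gp_nonneg _ _ _
    · have := gp_le_left (γ 0) (γ L) w
      rw [c1] at this
      exact this
  obtain ⟨P, hPor, hPd⟩ := hh γ β α 0 L 0 (dist (γ L) w) 0 (dist (γ 0) w)
    hγ hβ hα hL dist_nonneg dist_nonneg hα0.symm hβ0.symm (hβ1.trans hα1.symm) t0 ht0mem
  refine ⟨t0, ht0mem, ?_⟩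
  have hd0 : dist (γ 0) (γ t0) = t0 := by
    rw [hγ 0 hmem0 t0 ht0mem, abs_of_nonpos (by linarith [ht0mem.1])]; ring
  have hdL : dist (γ t0) (γ L) = L - t0 := by
    rw [hγ t0 ht0mem L hmemL, abs_of_nonpos (by linarith [ht0mem.2])]; ring
  rcases hPor with ⟨t, ht, rfl⟩ | ⟨t, ht, rfl⟩
  · -- P on β, the geodesic from (γ L) to w
    have h1 : dist (γ L) (β t) = t := by
      rw [← hβ0]
      rw [hβ 0 ⟨le_refl _, ht.1.trans ht.2⟩ t ht, abs_of_nonpos (by linarith [ht.1])]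
      ring
    have h2 : dist (β t) w = dist (γ L) w - t := by
      have h2' := hβ t ht (dist (γ L) w) ⟨dist_nonneg, le_refl _⟩
      rw [hβ1, abs_of_nonpos (by linarith [ht.2])] at h2'
      linarith
    have h3 := dist_triangle (γ L) (β t) (γ t0)
    rw [dist_comm (β t) (γ t0), dist_comm (γ L) (γ t0)] at h3
    have h4 := dist_triangle w (β t) (γ t0)
    rw [dist_comm w (β t), dist_comm (β t) (γ t0)] at h4
    rw [hgpw]
    have h5 : dist w (γ t0) = dist (γ t0) w := dist_comm _ _
    linarith
  · -- P on α, the geodesic from (γ 0) to w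
    have h1 : dist (γ 0) (α t) = t := by
      rw [← hα0]
      rw [hα 0 ⟨le_refl _, ht.1.trans ht.2⟩ t ht, abs_of_nonpos (by linarith [ht.1])]
      ring
    have h2 : dist (α t) w = dist (γ 0) w - t := by
      have h2' := hα t ht (dist (γ 0) w) ⟨dist_nonneg, le_refl _⟩
      rw [hα1, abs_of_nonpos (by linarith [ht.2])] at h2'
      linarith
    have h3 := dist_triangle (γ 0) (α t) (γ t0)
    rw [dist_comm (α t) (γ t0)] at h3
    have h4 := dist_triangle w (α t) (γ t0)
    rw [dist_comm w (α t), dist_comm (α t) (γ t0)] at h4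
    rw [hgpw]
    have h5 : dist w (γ t0) = dist (γ t0) w := dist_comm _ _
    linarith

/-- T3: the four point inequality, with constant `3δ`. -/
lemma gp_four_point {δ : ℝ} (hg : GeodesicSpace A) (hh : DeltaHyp A δ)
    (w a b c : A) : min (gp w a b) (gp w b c) - 3 * δ ≤ gp w a c := by
  obtain ⟨γ1, hγ1, h10, h11⟩ := hg a c
  obtain ⟨γ2, hγ2, h20, h21⟩ := hg c b
  obtain ⟨γ3, hγ3, h30, h31⟩ := hg a b
  obtain ⟨s, hs, hsd⟩ := exists_near_geod hg hh hγ1 dist_nonneg w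
  rw [h10, h11] at hsd
  obtain ⟨P, hPor, hPd⟩ := hh γ1 γ2 γ3 0 (dist a c) 0 (dist c b) 0 (dist a b)
    hγ1 hγ2 hγ3 dist_nonneg dist_nonneg dist_nonneg
    (h10.trans h30.symm) (h11.trans h20.symm) (h21.trans h31.symm) s hs
  have htri : dist w P ≤ dist w (γ1 s) + δ := by
    have := dist_triangle w (γ1 s) P
    linarith
  rcases hPor with ⟨t, ht, rfl⟩ | ⟨t, ht, rfl⟩
  · -- on γ2 : c to b
    have hg2 := gp_le_dist_geod hγ2 dist_nonneg w ht
    rw [h20, h21] at hg2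
    have hmin : min (gp w a b) (gp w b c) ≤ gp w c b := by
      rw [gp_symm w c b]; exact min_le_right _ _
    linarith
  · -- on γ3 : a to b
    have hg3 := gp_le_dist_geod hγ3 dist_nonneg w ht
    rw [h30, h31] at hg3
    have hmin : min (gp w a b) (gp w b c) ≤ gp w a b := min_le_left _ _
    linarith

/-- T4: chain inequality. -/
lemma gp_chain {δ : ℝ} (hg : GeodesicSpace A) (hh : DeltaHyp A δ) (hδ : 0 ≤ δ) :
    ∀ (k n : ℕ), 1 ≤ n → n ≤ 2 ^ k → ∀ (c : ℕ → A) (w : A) (T : ℝ),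
      (∀ i < n, T ≤ gp w (c i) (c (i + 1))) → T - 3 * δ * k ≤ gp w (c 0) (c n) := by
  intro k
  induction k with
  | zero =>
    intro n h1 h2 c w T hT
    have : n = 1 := le_antisymm (by simpa using h2) h1
    subst this
    simpa using hT 0 (by norm_num)
  | succ k ih =>
    intro n h1 h2 c w T hT
    rcases eq_or_lt_of_le h1 with h1' | h1'
    · rw [← h1']
      have := hT 0 (by omega)
      have hk : (0:ℝ) ≤ 3 * δ * (k + 1 : ℕ) := by positivity
      linarith
    · have h2' : n ≤ 2 ^ k + 2 ^ k := by
        rw [pow_succ] at h2; omega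
      have hp : 1 ≤ 2 ^ k := Nat.one_le_two_pow
      have hm1 : 1 ≤ n / 2 := by omega
      have hm2 : n / 2 ≤ 2 ^ k := by omega
      have hm3 : 1 ≤ n - n / 2 := by omega
      have hm4 : n - n / 2 ≤ 2 ^ k := by omega
      have hA := ih (n / 2) hm1 hm2 c w T (fun i hi => hT i (by omega))
      have hB := ih (n - n / 2) hm3 hm4 (fun i => c (n / 2 + i)) w T
        (fun i hi => by
          have := hT (n / 2 + i) (by omega)
          simpa [Nat.add_assoc] using this)
      have hBe : (fun i => c (n / 2 + i)) (n - n / 2) = c n := by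
        simp only []; congr 1; omega
      rw [show n / 2 + (n - n / 2) = n by omega] at hB
      have key := gp_four_point hg hh w (c 0) (c (n / 2)) (c n)
      have hmin : T - 3 * δ * k ≤ min (gp w (c 0) (c (n / 2))) (gp w (c (n / 2)) (c n)) :=
        le_min hA (by simpa using hB)
      have hcast : ((k + 1 : ℕ) : ℝ) = (k : ℝ) + 1 := by push_cast; ring
      rw [hcast]
      linarith

lemma qie_pos {K C : ℝ} {h : A → B} (hh : IsQIEmbedding K C h) : 0 < K :=
  lt_of_lt_of_le one_pos hh.1

lemma qie_dist_le {K C : ℝ} {h : A → B} (hh : IsQIEmbedding K C h) (x y : A) :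
    dist x y ≤ K * (dist (h x) (h y) + C) := by
  obtain ⟨hK, hC, hb⟩ := hh
  have hK0 : (0:ℝ) < K := lt_of_lt_of_le one_pos hK
  have h1 := (hb x y).1
  have h2 : K⁻¹ * dist x y ≤ dist (h x) (h y) + C := by linarith
  calc dist x y = K * (K⁻¹ * dist x y) := by field_simp
    _ ≤ K * (dist (h x) (h y) + C) := mul_le_mul_of_nonneg_left h2 hK0.le

lemma qie_mono {K C K' C' : ℝ} {h : A → B} (hh : IsQIEmbedding K C h)
    (hK : K ≤ K') (hC : C ≤ C') : IsQIEmbedding K' C' h := by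
  obtain ⟨hK1, hC1, hb⟩ := hh
  have hK0 : (0:ℝ) < K := lt_of_lt_of_le one_pos hK1
  have hK0' : (0:ℝ) < K' := lt_of_lt_of_le hK0 hK
  refine ⟨hK1.trans hK, hC1.trans hC, fun x y => ?_⟩
  obtain ⟨hl, hu⟩ := hb x y
  constructor
  · have : K'⁻¹ * dist x y ≤ K⁻¹ * dist x y :=
      mul_le_mul_of_nonneg_right (by
        apply inv_anti₀ hK0 hK) dist_nonneg
    linarith
  · have : K * dist x y ≤ K' * dist x y := mul_le_mul_of_nonneg_right hK dist_nonneg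
    linarith

lemma qie_comp {D : Type*} [MetricSpace D] {K1 C1 K2 C2 : ℝ} {f : A → B} {g : B → D}
    (hf : IsQIEmbedding K1 C1 f) (hg : IsQIEmbedding K2 C2 g) :
    IsQIEmbedding (K1 * K2) (K2 * C1 + C2 + C1) (fun x => g (f x)) := by
  obtain ⟨hK1, hC1, hbf⟩ := hf
  obtain ⟨hK2, hC2, hbg⟩ := hg
  have hK10 : (0:ℝ) < K1 := lt_of_lt_of_le one_pos hK1
  have hK20 : (0:ℝ) < K2 := lt_of_lt_of_le one_pos hK2
  have hc0 : 0 ≤ K2 * C1 := mul_nonneg hK20.le hC1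
  refine ⟨by nlinarith, by linarith, fun x y => ?_⟩
  obtain ⟨l1, u1⟩ := hbf x y
  obtain ⟨l2, u2⟩ := hbg (f x) (f y)
  constructor
  · have e1 : K2⁻¹ * (K1⁻¹ * dist x y - C1) ≤ K2⁻¹ * dist (f x) (f y) :=
      mul_le_mul_of_nonneg_left l1 (inv_nonneg.2 hK20.le)
    have e2 : (K1 * K2)⁻¹ * dist x y = K2⁻¹ * (K1⁻¹ * dist x y) := by
      rw [mul_inv]; ring
    have e3 : K2⁻¹ * C1 ≤ C1 := by
      have h4 : K2⁻¹ ≤ 1 := inv_le_one_of_one_le₀ hK2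
      nlinarith
    have e4 : K2⁻¹ * (K1⁻¹ * dist x y - C1)
        = K2⁻¹ * (K1⁻¹ * dist x y) - K2⁻¹ * C1 := by ring
    linarith
  · have e1 : K2 * dist (f x) (f y) ≤ K2 * (K1 * dist x y + C1) :=
      mul_le_mul_of_nonneg_left u1 hK20.le
    have e2 : K2 * (K1 * dist x y + C1) = K1 * K2 * dist x y + K2 * C1 := by ring
    linarith

/-- The middle-chain estimate: along a geodesic segment of length at most `6m` that
stays at distance at least `m` from `w`, the Gromov product of the images of the
endpoints with respect to the image of `w` is at least `m/(2K)` up to constants. -/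
lemma middle_bound {δ : ℝ} (hgB : GeodesicSpace B) (hhB : DeltaHyp B δ) (hδ : 0 ≤ δ)
    {K C : ℝ} {h : A → B} (hh : IsQIEmbedding K C h)
    (N : ℕ) (hN1 : 1 ≤ N) (hNR : 12 * K ^ 2 ≤ (N : ℝ))
    {γ : ℝ → A} {L : ℝ} (hγ : IsGeodSegment γ 0 L) (hL : 0 ≤ L) (w : A) {m : ℝ}
    (hm : 0 ≤ m) (hdist : ∀ s ∈ Icc (0:ℝ) L, m ≤ dist w (γ s)) (hlen : L ≤ 6 * m) :
    m / (2 * K) - (2 * C + 3 * δ * (N : ℝ)) ≤ gp (h w) (h (γ 0)) (h (γ L)) := by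
  obtain ⟨hK1, hC, hb⟩ := hh
  have hK0 : (0:ℝ) < K := lt_of_lt_of_le one_pos hK1
  have hN0 : (0:ℝ) < (N : ℝ) := by exact_mod_cast hN1
  have key : ∀ i < N, m / (2 * K) - 2 * C ≤
      gp (h w) (h (γ (L * i / N))) (h (γ (L * ((i + 1 : ℕ) : ℝ) / N))) := by
    intro i hi
    push_cast
    have hiN : (i : ℝ) ≤ (N : ℝ) := by exact_mod_cast hi.le
    have hiN' : ((i : ℝ) + 1) ≤ (N : ℝ) := by exact_mod_cast hi
    have hs_mem : L * i / N ∈ Icc (0:ℝ) L := by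
      constructor
      · positivity
      · rw [div_le_iff₀ hN0]
        nlinarith [mul_le_mul_of_nonneg_left hiN hL]
    have hs'_mem : L * (i + 1) / N ∈ Icc (0:ℝ) L := by
      constructor
      · positivity
      · rw [div_le_iff₀ hN0]
        push_cast
        nlinarith [mul_le_mul_of_nonneg_left hiN' hL]
    have hdiff : L * (i + 1) / N - L * i / N = L / N := by
      push_cast; field_simp; ring
    have hLN : 0 ≤ L / N := div_nonneg hL hN0.le
    have hnp : L * i / N - L * (i + 1) / N ≤ 0 := by linarith
    have hss' : dist (γ (L * i / N)) (γ (L * (i + 1) / N)) = L / N := by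
      rw [hγ _ hs_mem _ hs'_mem, abs_of_nonpos hnp]
      linarith
    have hstep : dist (h (γ (L * i / N))) (h (γ (L * (i + 1) / N))) ≤ K * (L / N) + C := by
      have hu := (hb (γ (L * i / N)) (γ (L * (i + 1) / N))).2
      rw [hss'] at hu
      exact hu
    have hbase : K⁻¹ * m - C ≤ dist (h (γ (L * i / N))) (h w) := by
      have h1 := (hb (γ (L * i / N)) w).1
      have h2 := hdist _ hs_mem
      rw [dist_comm w _] at h2
      have h3 : K⁻¹ * m ≤ K⁻¹ * dist (γ (L * i / N)) w :=
        mul_le_mul_of_nonneg_left h2 (inv_nonneg.2 hK0.le)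
      linarith
    have hsub := gp_ge_sub (h w) (h (γ (L * i / N))) (h (γ (L * (i + 1) / N)))
    have harith : K * (L / N) ≤ m / (2 * K) := by
      rw [← mul_div_assoc, div_le_div_iff₀ hN0 (by positivity)]
      nlinarith [mul_le_mul_of_nonneg_left hlen (by positivity : (0:ℝ) ≤ 2 * K ^ 2),
        mul_le_mul_of_nonneg_left hNR hm]
    have hKinv : K⁻¹ * m = m / K := by
      field_simp
    have hhalf : m / K = m / (2 * K) + m / (2 * K) := by
      ring
    linarith
  have hchain := gp_chain hgB hhB hδ N N hN1 (Nat.lt_two_pow_self (n := N)).le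
    (fun i => h (γ (L * i / N))) (h w) (m / (2 * K) - 2 * C) key
  have hcN : L * (N : ℝ) / N = L := by
    field_simp
  have e0 : (fun i : ℕ => h (γ (L * i / N))) 0 = h (γ 0) := by norm_num
  have eN : (fun i : ℕ => h (γ (L * i / N))) N = h (γ L) := by
    show h (γ (L * (N : ℝ) / N)) = h (γ L)
    rw [hcN]
  rw [show L * ((0:ℕ):ℝ) / N = 0 by simp, hcN] at hchain
  linarith

set_option maxHeartbeats 2000000 in
/-- **Key proposition**: a quasi-isometric embedding between geodesic
`δ`-hyperbolic spaces roughly preserves Gromov products from below. -/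
lemma gp_lower_qie {δ : ℝ} (hδ : 0 ≤ δ)
    (hgA : GeodesicSpace A) (hhA : DeltaHyp A δ)
    (hgB : GeodesicSpace B) (hhB : DeltaHyp B δ)
    {K C : ℝ} {h : A → B} (hh : IsQIEmbedding K C h) :
    ∃ b : ℝ, ∀ w x y : A, gp w x y / (2 * K) - b ≤ gp (h w) (h x) (h y) := by
  have hK1 := hh.1
  have hC0 := hh.2.1
  have hb := hh.2.2
  have hK0 : (0:ℝ) < K := lt_of_lt_of_le one_pos hK1
  obtain ⟨N', hN'⟩ := exists_nat_ge (12 * K ^ 2)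
  have hN1 : 1 ≤ N' + 1 := Nat.le_add_left _ _
  have hNR : 12 * K ^ 2 ≤ ((N' + 1 : ℕ) : ℝ) := by push_cast; linarith
  set βm : ℝ := 2 * C + 3 * δ * ((N' + 1 : ℕ) : ℝ) with hβmdef
  have hβm0 : 0 ≤ βm := by positivity
  have hβmC : C ≤ βm := by
    have : 0 ≤ 3 * δ * ((N' + 1 : ℕ) : ℝ) := by positivity
    linarith
  set β : ℝ := βm + 6 * δ with hβdef
  set m₀ : ℝ := 12 * δ * K + 2 * δ + 1 with hm₀def
  have hδK : 0 ≤ δ * K := mul_nonneg hδ hK0.le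
  have hm₀1 : 1 ≤ m₀ := by nlinarith
  have S : ∀ n : ℕ, ∀ w x y : A, m₀ ≤ gp w x y →
      dist x y ≤ 3 * 2 ^ n * gp w x y →
      gp w x y / (2 * K) - β ≤ gp (h w) (h x) (h y) := by
    intro n
    induction n with
    | zero =>
      intro w x y hm hl
      obtain ⟨γ, hγ, hγ0, hγ1⟩ := hgA x y
      have hL : (0:ℝ) ≤ dist x y := dist_nonneg
      have hgp0 : (0:ℝ) ≤ gp w x y := gp_nonneg _ _ _
      have hdist : ∀ s ∈ Icc (0:ℝ) (dist x y), gp w x y ≤ dist w (γ s) := by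
        intro s hs
        have := gp_le_dist_geod hγ hL w hs
        rw [hγ0, hγ1] at this
        exact this
      have hlen : dist x y ≤ 6 * gp w x y := by
        norm_num at hl
        linarith
      have hmid := middle_bound hgB hhB hδ ⟨hK1, hC0, hb⟩ (N' + 1) hN1 hNR hγ hL w
        hgp0 hdist hlen
      rw [hγ0, hγ1] at hmid
      rw [hβdef]
      linarith
    | succ n ih =>
      intro w x y hm hl
      obtain ⟨γ, hγ, hγ0, hγ1⟩ := hgA x y
      have hL : (0:ℝ) ≤ dist x y := dist_nonneg
      have hgp0 : (0:ℝ) < gp w x y := by linarith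
      have hss : gp x y w ∈ Icc (0:ℝ) (dist x y) := by
        refine ⟨gp_nonneg _ _ _, ?_⟩
        have := gp_le_left x y w
        rwa [dist_comm y x] at this
      have hmin : ∀ s ∈ Icc (0:ℝ) (dist x y), gp w x y ≤ dist w (γ s) := by
        intro s hs
        have := gp_le_dist_geod hγ hL w hs
        rw [hγ0, hγ1] at this
        exact this
      -- linear growth of the distance to `w` along the geodesic
      have hgrow_r : ∀ s ∈ Icc (0:ℝ) (dist x y),
          gp w x y + (s - gp x y w) ≤ dist w (γ s) := by
        intro s hs
        have h1 := dist_triangle y (γ s) w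
        have h2 : dist (γ s) y = dist x y - s := by
          have h2' := hγ s hs (dist x y) ⟨hL, le_refl _⟩
          rw [hγ1, abs_of_nonpos (by linarith [hs.2])] at h2'
          linarith
        rw [dist_comm y (γ s), h2] at h1
        have e1 : dist w (γ s) = dist (γ s) w := dist_comm _ _
        have e2 : dist y w = dist w y := dist_comm _ _
        have e3 : dist w x = dist x w := dist_comm _ _
        have e4 : dist y x = dist x y := dist_comm _ _
        simp only [gp]
        linarith
      have hgrow_l : ∀ s ∈ Icc (0:ℝ) (dist x y),
          gp w x y + (gp x y w - s) ≤ dist w (γ s) := by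
        intro s hs
        have h1 := dist_triangle x (γ s) w
        have h2 : dist x (γ s) = s := by
          rw [← hγ0, hγ 0 ⟨le_refl _, hL⟩ s hs, abs_of_nonpos (by linarith [hs.1])]
          ring
        rw [h2] at h1
        have e1 : dist w (γ s) = dist (γ s) w := dist_comm _ _
        have e2 : dist y w = dist w y := dist_comm _ _
        have e3 : dist w x = dist x w := dist_comm _ _
        have e4 : dist y x = dist x y := dist_comm _ _
        simp only [gp]
        linarith
      set u1 := max 0 (gp x y w - 3 * gp w x y) with hu1def
      set u2 := min (dist x y) (gp x y w + 3 * gp w x y) with hu2def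
      have hu1m : u1 ∈ Icc (0:ℝ) (dist x y) := by
        refine ⟨le_max_left _ _, ?_⟩
        apply max_le hL
        linarith [hss.2]
      have hu2m : u2 ∈ Icc (0:ℝ) (dist x y) := by
        refine ⟨le_min hL (by linarith [hss.1]), min_le_left _ _⟩
      have hu12 : u1 ≤ u2 := by
        apply max_le
        · exact le_min hL (by linarith [hss.1])
        · exact le_min (by linarith [hss.2]) (by linarith)
      -- the middle estimate
      have hmidgeo : IsGeodSegment (fun t => γ (t + u1)) 0 (u2 - u1) :=
        geod_shift (geod_restrict hγ hu1m.1 hu2m.2)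
      have hmid0 := middle_bound hgB hhB hδ ⟨hK1, hC0, hb⟩ (N' + 1) hN1 hNR hmidgeo
        (by linarith) w hgp0.le
        (fun s hs => hmin (s + u1) ⟨by linarith [hs.1, hu1m.1],
          by linarith [hs.2, hu2m.2]⟩)
        (by
          have q1 := min_le_right (dist x y) (gp x y w + 3 * gp w x y)
          have q2 := le_max_right (0:ℝ) (gp x y w - 3 * gp w x y)
          rw [← hu2def] at q1
          rw [← hu1def] at q2
          linarith)
      rw [zero_add, sub_add_cancel] at hmid0
      -- the left piece
      have hleft : gp w x y / (2 * K) - βm ≤ gp (h w) (h x) (h (γ u1)) := by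
        rcases le_or_gt (gp x y w - 3 * gp w x y) 0 with hdeg | hpos
        · have hu1z : u1 = 0 := max_eq_left hdeg
          rw [hu1z, hγ0, gp_self]
          have hxw : gp w x y ≤ dist x w := gp_le_left w x y
          have h1 := (hb x w).1
          have h2 : K⁻¹ * gp w x y ≤ K⁻¹ * dist x w :=
            mul_le_mul_of_nonneg_left hxw (inv_nonneg.2 hK0.le)
          have h3 : gp w x y / (2 * K) ≤ K⁻¹ * gp w x y := by
            rw [inv_mul_eq_div]
            apply div_le_div_of_nonneg_left hgp0.le hK0
            linarith
          linarith
        · have hu1v : u1 = gp x y w - 3 * gp w x y := max_eq_right hpos.le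
          obtain ⟨s, hsmem, hsle⟩ :=
            exists_near_geod hgA hhA (geod_restrict hγ le_rfl hu1m.2) hu1m.1 w
          rw [hγ0] at hsle
          have hsL : s ∈ Icc (0:ℝ) (dist x y) := ⟨hsmem.1, le_trans hsmem.2 hu1m.2⟩
          have hgl := hgrow_l s hsL
          have h1 : gp w x y + 3 * gp w x y ≤ dist w (γ s) := by
            have hs2 := hsmem.2
            rw [hu1v] at hs2
            linarith
          have hprod : 4 * gp w x y - 2 * δ ≤ gp w x (γ u1) := by linarith
          have h2m : 2 * gp w x y ≤ gp w x (γ u1) := by nlinarith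
          have hdm : dist x (γ u1) = u1 := by
            rw [← hγ0, hγ 0 ⟨le_refl _, hL⟩ u1 hu1m,
              abs_of_nonpos (by linarith [hu1m.1])]
            ring
          have hlen2 : dist x (γ u1) ≤ 3 * 2 ^ n * gp w x (γ u1) := by
            rw [hdm]
            have e1 : (3:ℝ) * 2 ^ (n + 1) * gp w x y
                = 3 * 2 ^ n * (2 * gp w x y) := by
              rw [pow_succ]; ring
            have e2 : (3:ℝ) * 2 ^ n * (2 * gp w x y) ≤ 3 * 2 ^ n * gp w x (γ u1) :=
              mul_le_mul_of_nonneg_left h2m (by positivity)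
            rw [e1] at hl
            linarith [hu1m.2]
          have hm' : m₀ ≤ gp w x (γ u1) := by linarith
          have hih := ih w x (γ u1) hm' hlen2
          have hd1 : 2 * gp w x y / (2 * K) ≤ gp w x (γ u1) / (2 * K) :=
            (div_le_div_iff_of_pos_right (by positivity)).mpr h2m
          have hd2 : 2 * gp w x y / (2 * K) = gp w x y / K :=
            mul_div_mul_left _ _ two_ne_zero
          have hd3 : gp w x y / K = gp w x y / (2 * K) + gp w x y / (2 * K) := by
            ring
          have hd4 : 6 * δ ≤ gp w x y / (2 * K) := by
            rw [le_div_iff₀ (by positivity)]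
            have hq : m₀ ≤ gp w x y := hm
            rw [hm₀def] at hq
            nlinarith [hq, hδ, hδK]
          rw [hβdef] at hih
          linarith
      -- the right piece
      have hright : gp w x y / (2 * K) - βm ≤ gp (h w) (h (γ u2)) (h y) := by
        rcases le_or_gt (dist x y) (gp x y w + 3 * gp w x y) with hdeg | hpos
        · have hu2z : u2 = dist x y := min_eq_left hdeg
          rw [hu2z, hγ1, gp_self]
          have hyw : gp w x y ≤ dist y w := gp_le_right w x y
          have h1 := (hb y w).1
          have h2 : K⁻¹ * gp w x y ≤ K⁻¹ * dist y w :=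
            mul_le_mul_of_nonneg_left hyw (inv_nonneg.2 hK0.le)
          have h3 : gp w x y / (2 * K) ≤ K⁻¹ * gp w x y := by
            rw [inv_mul_eq_div]
            apply div_le_div_of_nonneg_left hgp0.le hK0
            linarith
          linarith
        · have hu2v : u2 = gp x y w + 3 * gp w x y := min_eq_right hpos.le
          have hsub : IsGeodSegment (fun t => γ (t + u2)) 0 (dist x y - u2) :=
            geod_shift (geod_restrict hγ hu2m.1 le_rfl)
          obtain ⟨s, hsmem, hsle⟩ :=
            exists_near_geod hgA hhA hsub (by linarith [hu2m.2]) w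
          rw [zero_add, sub_add_cancel, hγ1] at hsle
          have hsle' : dist w (γ (s + u2)) ≤ gp w (γ u2) y + 2 * δ := hsle
          have hsL : s + u2 ∈ Icc (0:ℝ) (dist x y) :=
            ⟨by linarith [hsmem.1, hu2m.1], by linarith [hsmem.2]⟩
          have hgr := hgrow_r (s + u2) hsL
          have hu2e : u2 - gp x y w = 3 * gp w x y := by rw [hu2v]; ring
          have h1 : gp w x y + 3 * gp w x y ≤ dist w (γ (s + u2)) := by
            linarith [hgr, hsmem.1]
          have hprod : 4 * gp w x y - 2 * δ ≤ gp w (γ u2) y := by linarith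
          have h2m : 2 * gp w x y ≤ gp w (γ u2) y := by nlinarith
          have hdm : dist (γ u2) y = dist x y - u2 := by
            have h2' := hγ u2 hu2m (dist x y) ⟨hL, le_refl _⟩
            rw [hγ1, abs_of_nonpos (by linarith [hu2m.2])] at h2'
            linarith
          have hlen2 : dist (γ u2) y ≤ 3 * 2 ^ n * gp w (γ u2) y := by
            rw [hdm]
            have e1' : (3:ℝ) * 2 ^ (n + 1) * gp w x y
                = 3 * 2 ^ n * (2 * gp w x y) := by
              rw [pow_succ]; ring
            have e2' : (3:ℝ) * 2 ^ n * (2 * gp w x y) ≤ 3 * 2 ^ n * gp w (γ u2) y :=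
              mul_le_mul_of_nonneg_left h2m (by positivity)
            rw [e1'] at hl
            linarith [hu2m.1]
          have hm' : m₀ ≤ gp w (γ u2) y := by linarith
          have hih := ih w (γ u2) y hm' hlen2
          have hd1 : 2 * gp w x y / (2 * K) ≤ gp w (γ u2) y / (2 * K) :=
            (div_le_div_iff_of_pos_right (by positivity)).mpr h2m
          have hd2 : 2 * gp w x y / (2 * K) = gp w x y / K :=
            mul_div_mul_left _ _ two_ne_zero
          have hd3 : gp w x y / K = gp w x y / (2 * K) + gp w x y / (2 * K) := by
            ring
          have hd4 : 6 * δ ≤ gp w x y / (2 * K) := by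
            rw [le_div_iff₀ (by positivity)]
            have hq : m₀ ≤ gp w x y := hm
            rw [hm₀def] at hq
            nlinarith [hq, hδ, hδK]
          rw [hβdef] at hih
          linarith
      -- combine via the four point inequality
      have c1 := gp_four_point hgB hhB (h w) (h x) (h (γ u1)) (h y)
      have c2 := gp_four_point hgB hhB (h w) (h (γ u1)) (h (γ u2)) (h y)
      have t1 : gp w x y / (2 * K) - βm - 3 * δ ≤ gp (h w) (h (γ u1)) (h y) := by
        have hmin2 : gp w x y / (2 * K) - βm ≤
            min (gp (h w) (h (γ u1)) (h (γ u2))) (gp (h w) (h (γ u2)) (h y)) :=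
          le_min hmid0 hright
        linarith
      have t2 : gp w x y / (2 * K) - βm - 3 * δ ≤ gp (h w) (h x) (h (γ u1)) := by
        linarith
      have hmin1 : gp w x y / (2 * K) - βm - 3 * δ ≤
          min (gp (h w) (h x) (h (γ u1))) (gp (h w) (h (γ u1)) (h y)) :=
        le_min t2 t1
      rw [hβdef]
      linarith
  refine ⟨β + m₀ / (2 * K), fun w x y => ?_⟩
  rcases le_or_gt (gp w x y) m₀ with hsmall | hbig
  · have h0 := gp_nonneg (h w) (h x) (h y)
    have h1 : gp w x y / (2 * K) ≤ m₀ / (2 * K) :=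
      (div_le_div_iff_of_pos_right (by positivity)).mpr hsmall
    have hβ0 : 0 ≤ β := by rw [hβdef]; linarith
    linarith
  · obtain ⟨n, hn⟩ := pow_unbounded_of_one_lt (dist x y) (one_lt_two (α := ℝ))
    have hgp1 : (1:ℝ) ≤ gp w x y := le_trans hm₀1 hbig.le
    have hlen : dist x y ≤ 3 * 2 ^ n * gp w x y := by
      have h2 : (0:ℝ) < 2 ^ n := by positivity
      nlinarith
    have := S n w x y hbig.le hlen
    have h1 : 0 ≤ m₀ / (2 * K) := by positivity
    linarith

/-- Transfer of divergence of Gromov products along a map satisfying the conclusion of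
`gp_lower_qie`. -/
lemma tendsto_transfer {ι : Type*} {l : Filter ι} {h : A → B} {K b : ℝ} (hK : 0 < K)
    (hgp : ∀ w x y : A, gp w x y / (2 * K) - b ≤ gp (h w) (h x) (h y))
    {x y : ι → A} (w₀ : A)
    (ht : Tendsto (fun i => gp w₀ (x i) (y i)) l atTop) (w' : B) :
    Tendsto (fun i => gp w' (h (x i)) (h (y i))) l atTop := by
  have h1 : Tendsto (fun i => gp w₀ (x i) (y i) / (2 * K)
      + -(b + dist (h w₀) w')) l atTop :=
    tendsto_atTop_add_const_right l _ (ht.atTop_div_const (by positivity))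
  apply tendsto_atTop_mono _ h1
  intro i
  have h2 := hgp w₀ (x i) (y i)
  have h3 := gp_base (h w₀) w' (h (x i)) (h (y i))
  linarith

/-- A quasi-isometric embedding maps Gromov sequences to Gromov sequences. -/
lemma isGromovSeq_map {δ : ℝ} (hδ : 0 ≤ δ)
    (hgA : GeodesicSpace A) (hhA : DeltaHyp A δ)
    (hgB : GeodesicSpace B) (hhB : DeltaHyp B δ)
    {K C : ℝ} {h : A → B} (hh : IsQIEmbedding K C h)
    {u : ℕ → A} (hu : IsGromovSeq u) : IsGromovSeq (fun i => h (u i)) := by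
  obtain ⟨b, hb⟩ := gp_lower_qie hδ hgA hhA hgB hhB hh
  intro w'
  exact tendsto_transfer (qie_pos hh) hb (u 0) (hu (u 0)) w'

/-- Two pointwise-boundedly-close sequences, one of which is Gromov, are equivalent. -/
lemma gromovEquiv_of_close {u v : ℕ → A} {c : ℝ} (hc : ∀ i, dist (u i) (v i) ≤ c)
    (hu : IsGromovSeq u) : GromovEquiv u v := by
  have hdiag : Tendsto (fun i : ℕ => (i, i)) atTop (atTop : Filter (ℕ × ℕ)) := by
    rw [← prod_atTop_atTop_eq]
    exact tendsto_id.prodMk tendsto_id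
  have hv : IsGromovSeq v := by
    intro w
    apply tendsto_atTop_mono _ (tendsto_atTop_add_const_right atTop (-(2 * c)) (hu w))
    intro p
    have h1 := gp_perturb_left w (u p.1) (v p.1) (u p.2)
    have h2 := gp_perturb_right w (v p.1) (u p.2) (v p.2)
    linarith [hc p.1, hc p.2]
  refine ⟨hu, hv, fun w => ?_⟩
  have hdist : Tendsto (fun i => dist (u i) w) atTop atTop := by
    have hcomp := (hu w).comp hdiag
    apply Filter.Tendsto.congr _ hcomp
    intro i
    exact gp_self w (u i)
  apply tendsto_atTop_mono _ (tendsto_atTop_add_const_right atTop (-c) hdist)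
  intro i
  have h1 := gp_perturb_right w (u i) (u i) (v i)
  rw [gp_self] at h1
  linarith [hc i]

end Aux

/-- **Proposition 2.7.** Boundary rigidity of geodesic δ-hyperbolic spaces is a
quasi-isometry invariant: if `φ : X → Y` is a `(λ,μ)`-quasi-isometry and `Y` is
boundary rigid, then so is `X`. -/
theorem boundaryRigid_of_quasiIsometry
    (X Y : Type*) [MetricSpace X] [MetricSpace Y] (δ : ℝ) (hδ : 0 ≤ δ)
    (hgX : GeodesicSpace X) (hgY : GeodesicSpace Y)
    (hhX : DeltaHyp X δ) (hhY : DeltaHyp Y δ)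
    (lam mu : ℝ) (φ : X → Y) (hφ : IsQuasiIsometry lam mu φ)
    (hY : BoundaryRigid Y) :
    BoundaryRigid X := by
  rcases isEmpty_or_nonempty X with hX | hX
  · intro Kf Cf f _ _
    exact ⟨0, fun x => (hX.false x).elim⟩
  intro Kf Cf f hfQI hfBdry
  obtain ⟨hφe, hφs⟩ := hφ
  obtain ⟨hlam1, hmu0, hφb⟩ := id hφe
  have hlam0 : (0:ℝ) < lam := lt_of_lt_of_le one_pos hlam1
  choose ψ hψ using hφs
  -- `ψ` is a quasi-inverse of `φ` and a quasi-isometric embedding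
  have hψe : IsQIEmbedding lam (3 * lam * mu) ψ := by
    refine ⟨hlam1, by positivity, fun a b => ?_⟩
    have ta := hψ a
    have tb := hψ b
    have tri1 : dist a b ≤ dist a (φ (ψ a)) + dist (φ (ψ a)) (φ (ψ b)) + dist (φ (ψ b)) b :=
      dist_triangle4 a (φ (ψ a)) (φ (ψ b)) b
    have tri2 : dist (φ (ψ a)) (φ (ψ b)) ≤ dist (φ (ψ a)) a + dist a b + dist b (φ (ψ b)) :=
      dist_triangle4 _ a b _
    have hcomm1 : dist (φ (ψ b)) b = dist b (φ (ψ b)) := dist_comm _ _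
    have hcomm2 : dist (φ (ψ a)) a = dist a (φ (ψ a)) := dist_comm _ _
    have hb' := hφb (ψ a) (ψ b)
    constructor
    · have h3 : dist a b ≤ lam * dist (ψ a) (ψ b) + 3 * mu := by
        linarith [hb'.2]
      have h4 : lam⁻¹ * dist a b ≤ lam⁻¹ * (lam * dist (ψ a) (ψ b) + 3 * mu) :=
        mul_le_mul_of_nonneg_left h3 (inv_nonneg.2 hlam0.le)
      have h5 : lam⁻¹ * (lam * dist (ψ a) (ψ b) + 3 * mu)
          = dist (ψ a) (ψ b) + 3 * mu * lam⁻¹ := by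
        field_simp
      have h6 : lam⁻¹ ≤ 1 := inv_le_one_of_one_le₀ hlam1
      nlinarith [hmu0, hlam1]
    · have h7 := qie_dist_le hφe (ψ a) (ψ b)
      have h8 : dist (φ (ψ a)) (φ (ψ b)) ≤ dist a b + 2 * mu := by
        linarith
      nlinarith [mul_le_mul_of_nonneg_left h8 hlam0.le]
  have hψs : ∀ x : X, dist x (ψ (φ x)) ≤ 2 * lam * mu := by
    intro x
    have h1 := qie_dist_le hφe x (ψ (φ x))
    have h2 := hψ (φ x)
    nlinarith [mul_le_mul_of_nonneg_left
      (by linarith : dist (φ x) (φ (ψ (φ x))) + mu ≤ 2 * mu) hlam0.le]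
  obtain ⟨hKf1, hCf0, hfb⟩ := id hfQI.1
  have hKf0 : (0:ℝ) < Kf := lt_of_lt_of_le one_pos hKf1
  -- the conjugated self-map of `Y`
  set g : Y → Y := fun z => φ (f (ψ z)) with hgdef
  have c1 := qie_comp hψe hfQI.1
  have c2 := qie_comp c1 hφe
  -- `g` is quasi-surjective
  have hgs : ∀ z : Y, dist z (g (φ ((hfQI.2 (ψ z)).choose)))
      ≤ 2 * mu + lam * (Cf + (Kf * (2 * lam * mu) + Cf)) := by
    intro z
    set x₁ := (hfQI.2 (ψ z)).choose with hx₁def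
    have hx₁ : dist (ψ z) (f x₁) ≤ Cf := (hfQI.2 (ψ z)).choose_spec
    have d1 : dist (ψ (φ x₁)) x₁ ≤ 2 * lam * mu := by
      rw [dist_comm]; exact hψs x₁
    have d2 : dist (f (ψ (φ x₁))) (f x₁) ≤ Kf * (2 * lam * mu) + Cf := by
      have := (hfb (ψ (φ x₁)) x₁).2
      nlinarith [mul_le_mul_of_nonneg_left d1 hKf0.le]
    have d3 : dist (ψ z) (f (ψ (φ x₁))) ≤ Cf + (Kf * (2 * lam * mu) + Cf) := by
      have htri := dist_triangle (ψ z) (f x₁) (f (ψ (φ x₁)))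
      rw [dist_comm (f x₁) (f (ψ (φ x₁)))] at htri
      linarith
    have d4 : dist (φ (ψ z)) (g (φ x₁)) ≤ lam * (Cf + (Kf * (2 * lam * mu) + Cf)) + mu := by
      have hup := (hφb (ψ z) (f (ψ (φ x₁)))).2
      have e : g (φ x₁) = φ (f (ψ (φ x₁))) := rfl
      rw [e]
      nlinarith [mul_le_mul_of_nonneg_left d3 hlam0.le]
    have d5 := hψ z
    have htri := dist_triangle z (φ (ψ z)) (g (φ x₁))
    linarith
  have hgQI : IsQuasiIsometry (lam * Kf * lam)
      (max (lam * (Kf * (3 * lam * mu) + Cf + 3 * lam * mu) + mu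
          + (Kf * (3 * lam * mu) + Cf + 3 * lam * mu))
        (2 * mu + lam * (Cf + (Kf * (2 * lam * mu) + Cf)))) g := by
    constructor
    · exact qie_mono c2 le_rfl (le_max_left _ _)
    · intro z
      exact ⟨φ ((hfQI.2 (ψ z)).choose), le_trans (hgs z) (le_max_right _ _)⟩
  -- `g` induces the identity on the boundary of `Y`
  obtain ⟨bψ, hbψ⟩ := gp_lower_qie hδ hgY hhY hgX hhX hψe
  obtain ⟨bφ, hbφ⟩ := gp_lower_qie hδ hgX hhX hgY hhY hφe
  have hbdryG : ∀ v : ℕ → Y, IsGromovSeq v → GromovEquiv v (g ∘ v) := by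
    intro v hv
    have hu : IsGromovSeq (fun i => ψ (v i)) := fun w =>
      tendsto_transfer hlam0 hbψ (v 0) (hv (v 0)) w
    obtain ⟨-, hfu2, hfu3⟩ := hfBdry _ hu
    have hgv : IsGromovSeq (fun i => φ (f (ψ (v i)))) := by
      intro w'
      exact tendsto_transfer hlam0 hbφ (f (ψ (v 0))) (hfu2 (f (ψ (v 0)))) w'
    have hprod : ∀ w' : Y,
        Tendsto (fun i => gp w' (φ (ψ (v i))) (φ (f (ψ (v i))))) atTop atTop := by
      intro w'
      exact tendsto_transfer hlam0 hbφ (ψ (v 0)) (hfu3 (ψ (v 0))) w'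
    refine ⟨hv, hgv, fun w => ?_⟩
    apply tendsto_atTop_mono _ (tendsto_atTop_add_const_right atTop (-mu) (hprod w))
    intro i
    have h1 := gp_perturb_left w (φ (ψ (v i))) (v i) (φ (f (ψ (v i))))
    have h2 : dist (φ (ψ (v i))) (v i) ≤ mu := by
      rw [dist_comm]; exact hψ (v i)
    have e : (g ∘ v) i = φ (f (ψ (v i))) := rfl
    rw [e]
    linarith
  obtain ⟨M, hM⟩ := hY _ _ g hgQI hbdryG
  refine ⟨lam * (M + (lam * (Kf * (2 * lam * mu) + Cf) + mu) + mu), fun x => ?_⟩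
  have d1 : dist (φ x) (g (φ x)) ≤ M := hM (φ x)
  have d2 : dist (ψ (φ x)) x ≤ 2 * lam * mu := by
    rw [dist_comm]; exact hψs x
  have d3 : dist (f (ψ (φ x))) (f x) ≤ Kf * (2 * lam * mu) + Cf := by
    have := (hfb (ψ (φ x)) x).2
    nlinarith [mul_le_mul_of_nonneg_left d2 hKf0.le]
  have d4 : dist (g (φ x)) (φ (f x)) ≤ lam * (Kf * (2 * lam * mu) + Cf) + mu := by
    have hup := (hφb (f (ψ (φ x))) (f x)).2
    have e : g (φ x) = φ (f (ψ (φ x))) := rfl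
    rw [e]
    nlinarith [mul_le_mul_of_nonneg_left d3 hlam0.le]
  have d5 : dist (φ x) (φ (f x)) ≤ M + (lam * (Kf * (2 * lam * mu) + Cf) + mu) :=
    le_trans (dist_triangle _ (g (φ x)) _) (by linarith)
  have d6 := qie_dist_le hφe x (f x)
  nlinarith [mul_le_mul_of_nonneg_left
    (by linarith : dist (φ x) (φ (f x)) + mu
      ≤ M + (lam * (Kf * (2 * lam * mu) + Cf) + mu) + mu) hlam0.le]

end BoundaryRigidity
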